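/- Let a_n, a_m, b_n, b_m : ℝ → ℝ be differentiable with b_m(θ) ≠ 0 for all θ. Then for every θ ∈ ℝ and every r > 0: ∂/∂r[ a_n(θ)/(b_m(θ)r) + a_m(θ)/b_m(θ) ] + ∂/∂θ[ b_n(θ)/(b_m(θ)r²) + 1/r ] = −Φ(θ)/r², where Φ(θ) = a_n(θ)/b_m(θ) − (b_n/b_m)'(θ). -/

import Mathlib

/-- divergence of the Dulac-rescaled generalized-polar vector field:
`∂/∂r[aₙ(θ)/(bₘ(θ)r) + aₘ(θ)/bₘ(θ)] + ∂/∂θ[bₙ(θ)/(bₘ(θ)r²) + 1/r] = −Φ(θ)/r²`,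
where `Φ = aₙ/bₘ − (bₙ/bₘ)'`. -/
theorem stmt_11 (an am bn bm : ℝ → ℝ)
    (han : Differentiable ℝ an) (ham : Differentiable ℝ am)
    (hbn : Differentiable ℝ bn) (hbm : Differentiable ℝ bm)
    (hbm0 : ∀ θ : ℝ, bm θ ≠ 0) (θ r : ℝ) (hr : 0 < r) :
    deriv (fun s : ℝ => an θ / (bm θ * s) + am θ / bm θ) r
      + deriv (fun u : ℝ => bn u / (bm u * r ^ 2) + 1 / r) θ
      = -(an θ / bm θ - deriv (fun u : ℝ => bn u / bm u) θ) / r ^ 2 := by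
  have hr0 : r ≠ 0 := hr.ne'
  have h1 : deriv (fun s : ℝ => an θ / (bm θ * s) + am θ / bm θ) r
      = -(an θ / bm θ) / r ^ 2 := by
    have : HasDerivAt (fun s : ℝ => an θ / (bm θ * s) + am θ / bm θ)
        (an θ / bm θ * -(r ^ 2)⁻¹) r := by
      have h := ((hasDerivAt_inv hr0).const_mul (an θ / bm θ)).add_const (am θ / bm θ)
      have heq : (fun s : ℝ => an θ / (bm θ * s) + am θ / bm θ)
          = fun s : ℝ => an θ / bm θ * s⁻¹ + am θ / bm θ := by
        funext s
        rw [div_mul_eq_div_div]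
        ring
      rw [heq]
      convert h using 1
    rw [this.deriv]; ring
  have hdq : DifferentiableAt ℝ (fun u => bn u / bm u) θ :=
    (hbn θ).div (hbm θ) (hbm0 θ)
  have h2 : deriv (fun u : ℝ => bn u / (bm u * r ^ 2) + 1 / r) θ
      = deriv (fun u : ℝ => bn u / bm u) θ / r ^ 2 := by
    have : (fun u : ℝ => bn u / (bm u * r ^ 2) + 1 / r)
        = fun u : ℝ => (fun u => bn u / bm u) u * (r ^ 2)⁻¹ + 1 / r := by
      funext u; field_simp
    rw [this, deriv_fun_add (hdq.mul_const _) (differentiableAt_const _),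
      deriv_mul_const hdq, deriv_const]
    field_simp
    simp
  rw [h1, h2]; ring
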